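/- arXiv:1905.02867 — 5 statements merged into one kernel-verified Lean document; each statement's English description precedes it below -/
import Mathlib

section
/- For every finite simple graph G, χ⃗_s(G) ≤ Δ(G), the maximum degree of G. -/
open Finset

variable {V : Type*} [Fintype V] [DecidableEq V]

/-- A weighted orientation of a simple graph `G`: each edge `uv` of `G` gets an
orientation (`dir u v = true` means the edge is directed from `u` to `v`, i.e. head `v`)
and a positive integer weight. -/
structure WOrientation (G : SimpleGraph V) where
  dir : V → V → Bool
  w : V → V → ℕ
  dir_adj : ∀ u v, dir u v = true → G.Adj u v
  dir_antisymm : ∀ u v, G.Adj u v → (dir u v = true ↔ ¬ dir v u = true)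
  w_symm : ∀ u v, w u v = w v u
  w_pos : ∀ u v, G.Adj u v → 1 ≤ w u v

/-- `S_{(D,w)}(v)`: the sum of the weights of the edges with head `v`. -/
def inSum {G : SimpleGraph V} (O : WOrientation G) (v : V) : ℕ :=
  ∑ u ∈ Finset.univ.filter (fun u => O.dir u v = true), O.w u v

/-- A weighted orientation is semi-proper if adjacent vertices get distinct
weighted in-sums. -/
def IsSemiProper {G : SimpleGraph V} (O : WOrientation G) : Prop :=
  ∀ u v, G.Adj u v → inSum O u ≠ inSum O v

/-- The maximum weighted in-sum of a weighted orientation. -/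
def maxS {G : SimpleGraph V} (O : WOrientation G) : ℕ :=
  Finset.univ.sup (inSum O)

/-- The semi-proper orientation number `χ⃗ₛ(G)`. -/
noncomputable def semiNum (G : SimpleGraph V) : ℕ :=
  sInf {k | ∃ O : WOrientation G, IsSemiProper O ∧ maxS O = k}

/-- The proper orientation number `χ⃗(G)`: all edge weights are one. -/
noncomputable def properNum (G : SimpleGraph V) : ℕ :=
  sInf {k | ∃ O : WOrientation G, IsSemiProper O ∧
    (∀ u v, G.Adj u v → O.w u v = 1) ∧ maxS O = k}

namespace SemiProperAux

/-- index of a vertex in a fixed enumeration -/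
noncomputable def vidx (v : V) : ℕ := (Fintype.equivFin V v : ℕ)

lemma vidx_lt_card (v : V) : vidx v < Fintype.card V := (Fintype.equivFin V v).2

lemma vidx_inj {a b : V} (h : vidx a = vidx b) : a = b := by
  have := (Fintype.equivFin V).injective (Fin.ext h)
  exact this

variable (G : SimpleGraph V) [DecidableRel G.Adj]

noncomputable def earlier (v : V) : Finset V := univ.filter (fun u => G.Adj u v ∧ vidx u < vidx v)

noncomputable def later (v : V) : Finset V := univ.filter (fun u => G.Adj v u ∧ vidx v < vidx u)

noncomputable def indeg (v : V) : ℕ := (earlier G v).card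

lemma mem_earlier {u v : V} : u ∈ earlier G v ↔ G.Adj u v ∧ vidx u < vidx v := by
  simp [earlier]

lemma mem_later {u v : V} : u ∈ later G v ↔ G.Adj v u ∧ vidx v < vidx u := by
  simp [later]

lemma deg_split (v : V) : indeg G v + (later G v).card ≤ G.maxDegree := by
  have hdisj : Disjoint (earlier G v) (later G v) := by
    rw [Finset.disjoint_left]
    intro a ha hb
    rw [mem_earlier] at ha; rw [mem_later] at hb
    omega
  have hsub : earlier G v ∪ later G v ⊆ G.neighborFinset v := by
    intro a ha
    rw [Finset.mem_union] at ha
    rw [SimpleGraph.mem_neighborFinset]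
    rcases ha with ha | ha
    · rw [mem_earlier] at ha; exact ha.1.symm
    · rw [mem_later] at ha; exact ha.1
  calc indeg G v + (later G v).card = (earlier G v ∪ later G v).card :=
        (Finset.card_union_of_disjoint hdisj).symm
    _ ≤ (G.neighborFinset v).card := Finset.card_le_card hsub
    _ = G.degree v := rfl
    _ ≤ G.maxDegree := G.degree_le_maxDegree v

noncomputable def Svert (v : V) : ℕ :=
  if indeg G v = 0 then 0
  else sInf {m : ℕ | (indeg G v ≤ m ∧ m ≤ G.maxDegree) ∧
    ∀ u : {x // x ∈ later G v}, Svert u.1 ≠ m}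
termination_by Fintype.card V - vidx v
decreasing_by
  have h1 : vidx v < vidx u.1 := (Finset.mem_filter.1 u.2).2.2
  have h2 : vidx u.1 < Fintype.card V := (Fintype.equivFin V u.1).2
  omega

lemma Svert_spec {v : V} (h : indeg G v ≠ 0) :
    (indeg G v ≤ Svert G v ∧ Svert G v ≤ G.maxDegree) ∧
      ∀ u : {x // x ∈ later G v}, Svert G u.1 ≠ Svert G v := by
  have hne : {m : ℕ | (indeg G v ≤ m ∧ m ≤ G.maxDegree) ∧
      ∀ u : {x // x ∈ later G v}, Svert G u.1 ≠ m}.Nonempty := by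
    have himg : ((later G v).attach.image (fun u => Svert G u.1)).card ≤ (later G v).card := by
      calc _ ≤ (later G v).attach.card := Finset.card_image_le
        _ = (later G v).card := Finset.card_attach
    have hcard : ((Finset.Icc (indeg G v) G.maxDegree) \
        ((later G v).attach.image (fun u => Svert G u.1))).Nonempty := by
      rw [← Finset.card_pos]
      have h1 := Finset.le_card_sdiff ((later G v).attach.image (fun u => Svert G u.1))
        (Finset.Icc (indeg G v) G.maxDegree)
      have h2 : (Finset.Icc (indeg G v) G.maxDegree).card = G.maxDegree + 1 - indeg G v :=
        Nat.card_Icc _ _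
      have h3 := deg_split G v
      omega
    obtain ⟨m, hm⟩ := hcard
    rw [Finset.mem_sdiff, Finset.mem_Icc] at hm
    refine ⟨m, ⟨hm.1, ?_⟩⟩
    intro u heq
    exact hm.2 (Finset.mem_image.2 ⟨u, Finset.mem_attach _ _, heq⟩)
  have := Nat.sInf_mem hne
  rw [Svert, if_neg h]
  exact this

lemma Svert_zero {v : V} (h : indeg G v = 0) : Svert G v = 0 := by
  rw [Svert, if_pos h]

lemma Svert_le (v : V) : Svert G v ≤ G.maxDegree := by
  by_cases h : indeg G v = 0
  · rw [Svert_zero G h]; exact Nat.zero_le _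
  · exact (Svert_spec G h).1.2

lemma Svert_lower {v : V} (h : indeg G v ≠ 0) : indeg G v ≤ Svert G v :=
  (Svert_spec G h).1.1

lemma Svert_proper {a b : V} (hab : G.Adj a b) : Svert G a ≠ Svert G b := by
  -- wlog vidx a < vidx b
  have key : ∀ x y : V, G.Adj x y → vidx x < vidx y → Svert G x ≠ Svert G y := by
    intro x y hxy hlt
    have hy : indeg G y ≠ 0 := by
      have hm : x ∈ earlier G y := (mem_earlier G).2 ⟨hxy, hlt⟩
      have := Finset.card_pos.2 ⟨x, hm⟩
      rw [indeg]
      omega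
    by_cases hx : indeg G x = 0
    · rw [Svert_zero G hx]
      have := Svert_lower G hy
      omega
    · have hmem : y ∈ later G x := (mem_later G).2 ⟨hxy, hlt⟩
      exact fun h => (Svert_spec G hx).2 ⟨y, hmem⟩ h.symm
  have hne : vidx a ≠ vidx b := fun h => hab.ne (vidx_inj h)
  rcases lt_or_gt_of_ne hne with h | h
  · exact key a b hab h
  · exact fun hh => key b a hab.symm h hh.symm

noncomputable def pick (v : V) : V :=
  if h : (earlier G v).Nonempty then h.choose else v

lemma pick_mem {v : V} (h : (earlier G v).Nonempty) : pick G v ∈ earlier G v := by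
  rw [pick, dif_pos h]
  exact h.choose_spec

noncomputable def wt (a b : V) : ℕ :=
  if vidx a < vidx b then (if a = pick G b then Svert G b - indeg G b + 1 else 1)
  else (if b = pick G a then Svert G a - indeg G a + 1 else 1)

noncomputable def Ori : WOrientation G where
  dir := fun a b => decide (G.Adj a b ∧ vidx a < vidx b)
  w := wt G
  dir_adj := by
    intro u v h
    exact (of_decide_eq_true h).1
  dir_antisymm := by
    intro u v huv
    have hne : vidx u ≠ vidx v := fun h => huv.ne (vidx_inj h)
    simp only [decide_eq_true_eq]
    constructor
    · rintro ⟨-, h⟩ ⟨-, h'⟩; omega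
    · intro h
      refine ⟨huv, ?_⟩
      by_contra h'
      exact h ⟨huv.symm, by omega⟩
  w_symm := by
    intro u v
    rw [wt, wt]
    rcases lt_trichotomy (vidx u) (vidx v) with h | h | h
    · rw [if_pos h, if_neg (show ¬ vidx v < vidx u by omega)]
    · have : u = v := vidx_inj h
      subst this; rfl
    · rw [if_neg (show ¬ vidx u < vidx v by omega), if_pos h]
  w_pos := by
    intro u v _
    rw [wt]
    split_ifs <;> omega

lemma inSum_Ori (v : V) : inSum (Ori G) v = Svert G v := by
  have hfilter : (univ.filter (fun u => (Ori G).dir u v = true)) = earlier G v := by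
    ext u
    simp only [Ori, Finset.mem_filter, Finset.mem_univ, true_and, decide_eq_true_eq,
      mem_earlier]
  rw [inSum, hfilter]
  have hw : ∀ u ∈ earlier G v, (Ori G).w u v =
      (if u = pick G v then Svert G v - indeg G v else 0) + 1 := by
    intro u hu
    have hlt : vidx u < vidx v := ((mem_earlier G).1 hu).2
    show wt G u v = _
    rw [wt, if_pos hlt]
    split_ifs <;> omega
  rw [Finset.sum_congr rfl hw, Finset.sum_add_distrib, Finset.sum_ite_eq']
  by_cases h : indeg G v = 0
  · have hemp : earlier G v = ∅ := Finset.card_eq_zero.1 h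
    rw [Svert_zero G h, hemp]
    simp
  · have hne : (earlier G v).Nonempty := Finset.card_pos.1 (Nat.pos_of_ne_zero h)
    rw [if_pos (pick_mem G hne), Finset.sum_const, smul_eq_mul, mul_one]
    have h1 := Svert_lower G h
    show Svert G v - indeg G v + indeg G v = Svert G v
    omega

end SemiProperAux

/-- `χ⃗ₛ(G) ≤ Δ(G)`. -/
theorem stmt2 (G : SimpleGraph V) [DecidableRel G.Adj] :
    semiNum G ≤ G.maxDegree := by
  have hmem : maxS (SemiProperAux.Ori G) ∈
      {k | ∃ O : WOrientation G, IsSemiProper O ∧ maxS O = k} := by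
    refine ⟨SemiProperAux.Ori G, ?_, rfl⟩
    intro u v huv
    rw [SemiProperAux.inSum_Ori, SemiProperAux.inSum_Ori]
    exact SemiProperAux.Svert_proper G huv
  have h1 : semiNum G ≤ maxS (SemiProperAux.Ori G) := Nat.sInf_le hmem
  have h2 : maxS (SemiProperAux.Ori G) ≤ G.maxDegree := by
    apply Finset.sup_le
    intro v _
    rw [SemiProperAux.inSum_Ori]
    exact SemiProperAux.Svert_le G v
  exact le_trans h1 h2
end

section
/- Every finite simple graph G has an optimal semi-proper orientation (D,w) in which every edge weight is 1 or 2; that is, there exists a semi-proper orientation with all weights in {1,2} whose maximum weighted in-sum equals χ⃗_s(G). -/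
set_option linter.unusedSectionVars false
set_option maxHeartbeats 1000000


open Finset

variable {V : Type*} [Fintype V] [DecidableEq V]

namespace Stmt3Aux

def indeg (D : V → V → Bool) (v : V) : ℕ :=
  (Finset.univ.filter (fun u => D u v = true)).card

def rev (D : V → V → Bool) (v u : V) : V → V → Bool :=
  fun x y => if x = u ∧ y = v then true else if x = v ∧ y = u then false else D x y

lemma rev_eq_of (D : V → V → Bool) (v u x y : V)
    (h1 : ¬(x = u ∧ y = v)) (h2 : ¬(x = v ∧ y = u)) : rev D v u x y = D x y := by
  simp only [rev, if_neg h1, if_neg h2]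

lemma rev_uv (D : V → V → Bool) (v u : V) : rev D v u u v = true := by
  simp [rev]

lemma rev_vu (D : V → V → Bool) (v u : V) (huv : u ≠ v) : rev D v u v u = false := by
  simp [rev, huv.symm]

lemma indeg_rev_v (D : V → V → Bool) (v u : V) (huv : u ≠ v)
    (hDuv : D u v = false) : indeg (rev D v u) v = indeg D v + 1 := by
  unfold indeg
  have hset : Finset.univ.filter (fun x => rev D v u x v = true)
      = insert u (Finset.univ.filter (fun x => D x v = true)) := by
    ext x
    simp only [Finset.mem_filter, Finset.mem_univ, true_and, Finset.mem_insert]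
    by_cases hx : x = u
    · subst hx; simp [rev]
    · rw [rev_eq_of D v u x v (by tauto) (by rintro ⟨rfl, rfl⟩; exact huv rfl)]
      tauto
  rw [hset, Finset.card_insert_of_notMem (by simp [hDuv])]

lemma indeg_rev_u (D : V → V → Bool) (v u : V) (huv : u ≠ v)
    (hDvu : D v u = true) : indeg (rev D v u) u = indeg D u - 1 := by
  unfold indeg
  have hset : Finset.univ.filter (fun x => rev D v u x u = true)
      = (Finset.univ.filter (fun x => D x u = true)).erase v := by
    ext x
    simp only [Finset.mem_filter, Finset.mem_univ, true_and, Finset.mem_erase]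
    by_cases hx : x = v
    · subst hx; simp [rev, huv.symm]
    · rw [rev_eq_of D v u x u (by rintro ⟨rfl, rfl⟩; exact huv rfl) (by tauto)]
      tauto
  rw [hset, Finset.card_erase_of_mem (by simp [hDvu])]

lemma indeg_rev_other (D : V → V → Bool) (v u y : V) (h1 : y ≠ v) (h2 : y ≠ u) :
    indeg (rev D v u) y = indeg D y := by
  unfold indeg
  congr 1
  apply Finset.filter_congr
  intro x _
  rw [rev_eq_of D v u x y (by tauto) (by tauto)]

def theta (D : V → V → Bool) (S : V → ℕ) : ℕ :=
  ∑ v, (S v - 2 * indeg D v) * 4 ^ (S v)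

def pot (M : ℕ) (D : V → V → Bool) (S : V → ℕ) : ℕ :=
  (∑ v, S v) * (Fintype.card V * (M * 4 ^ M) + 1) + theta D S

lemma theta_lt (M : ℕ) (D : V → V → Bool) (S : V → ℕ) (hS : ∀ v, S v ≤ M) :
    theta D S < Fintype.card V * (M * 4 ^ M) + 1 := by
  have h : ∀ v : V, (S v - 2 * indeg D v) * 4 ^ (S v) ≤ M * 4 ^ M := by
    intro v
    exact Nat.mul_le_mul (le_trans (Nat.sub_le _ _) (hS v))
      (Nat.pow_le_pow_right (by norm_num) (hS v))
  calc theta D S ≤ ∑ _v : V, M * 4 ^ M := Finset.sum_le_sum (fun v _ => h v)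
    _ = Fintype.card V * (M * 4 ^ M) := by
        rw [Finset.sum_const, Finset.card_univ, smul_eq_mul]
    _ < _ := Nat.lt_succ_self _

lemma pot_lt_of_sum_lt (M : ℕ) (D1 D2 : V → V → Bool) (S1 S2 : V → ℕ)
    (h1 : ∀ v, S1 v ≤ M) (hsum : ∑ v, S1 v < ∑ v, S2 v) :
    pot M D1 S1 < pot M D2 S2 := by
  have hθ := theta_lt M D1 S1 h1
  unfold pot
  set W := Fintype.card V * (M * 4 ^ M) + 1 with hW
  calc (∑ v, S1 v) * W + theta D1 S1 < (∑ v, S1 v) * W + W := by omega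
    _ = ((∑ v, S1 v) + 1) * W := by ring
    _ ≤ (∑ v, S2 v) * W := Nat.mul_le_mul_right _ (by omega)
    _ ≤ _ := Nat.le_add_right _ _

lemma sum_lt_of_two (v u : V) (hvu : v ≠ u) (f g : V → ℕ)
    (h : ∀ x, x ≠ v → x ≠ u → f x = g x) (hlt : f v + f u < g v + g u) :
    ∑ x, f x < ∑ x, g x := by
  classical
  have hsplit : ∀ (k : V → ℕ), ∑ x, k x
      = k v + (k u + ∑ x ∈ (Finset.univ.erase v).erase u, k x) := by
    intro k
    rw [Finset.add_sum_erase _ k (Finset.mem_erase.2 ⟨Ne.symm hvu, Finset.mem_univ u⟩),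
      Finset.add_sum_erase _ k (Finset.mem_univ v)]
  rw [hsplit f, hsplit g]
  have : ∑ x ∈ (Finset.univ.erase v).erase u, f x
      = ∑ x ∈ (Finset.univ.erase v).erase u, g x := by
    apply Finset.sum_congr rfl
    intro x hx
    simp only [Finset.mem_erase] at hx
    exact h x hx.2.1 hx.1
  omega

lemma theta_rev_lt (D : V → V → Bool) (S : V → ℕ) (v u : V) (hvu : v ≠ u)
    (hDvu : D v u = true) (hDuv : D u v = false)
    (hbad : 2 * indeg D v < S v) (htu : S u < S v) (he : 1 ≤ indeg D u) :
    theta (rev D v u) S < theta D S := by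
  apply sum_lt_of_two v u hvu
  · intro x hxv hxu
    rw [indeg_rev_other D v u x hxv (Ne.symm (Ne.symm hxu))]
  · rw [indeg_rev_v D v u (Ne.symm hvu) hDuv, indeg_rev_u D v u (Ne.symm hvu) hDvu]
    set s := S v; set t := S u; set d := indeg D v; set e := indeg D u
    have h1 : (s - 2 * (d + 1)) + 1 ≤ s - 2 * d := by omega
    have h2 : t - 2 * (e - 1) ≤ (t - 2 * e) + 2 := by omega
    have h3 : 2 * 4 ^ t < 4 ^ s := by
      have : 4 ^ (t + 1) ≤ 4 ^ s := Nat.pow_le_pow_right (by norm_num) (by omega)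
      have h4 : 0 < 4 ^ t := Nat.pow_pos (by norm_num)
      calc 2 * 4 ^ t < 4 * 4 ^ t := by omega
        _ = 4 ^ (t + 1) := by ring
        _ ≤ 4 ^ s := this
    calc (s - 2 * (d + 1)) * 4 ^ s + (t - 2 * (e - 1)) * 4 ^ t
        ≤ (s - 2 * (d + 1)) * 4 ^ s + ((t - 2 * e) + 2) * 4 ^ t :=
          Nat.add_le_add_left (Nat.mul_le_mul_right _ h2) _
      _ = (s - 2 * (d + 1)) * 4 ^ s + (t - 2 * e) * 4 ^ t + 2 * 4 ^ t := by ring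
      _ < (s - 2 * (d + 1)) * 4 ^ s + (t - 2 * e) * 4 ^ t + 4 ^ s := by omega
      _ = ((s - 2 * (d + 1)) + 1) * 4 ^ s + (t - 2 * e) * 4 ^ t := by ring
      _ ≤ (s - 2 * d) * 4 ^ s + (t - 2 * e) * 4 ^ t :=
          Nat.add_le_add_right (Nat.mul_le_mul_right _ h1) _

def Q (G : SimpleGraph V) (M : ℕ) (D : V → V → Bool) (S : V → ℕ) : Prop :=
  (∀ u v, D u v = true → G.Adj u v) ∧
  (∀ u v, G.Adj u v → (D u v = true ↔ ¬ D v u = true)) ∧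
  (∀ u v, G.Adj u v → S u ≠ S v) ∧
  (∀ v, indeg D v ≤ S v) ∧
  (∀ v, indeg D v = 0 → S v = 0) ∧
  (∀ v, S v ≤ M)

lemma indeg_pos (D : V → V → Bool) {x y : V} (h : D x y = true) : 1 ≤ indeg D y :=
  Finset.card_pos.2 ⟨x, by simp [h]⟩

lemma no_bad (G : SimpleGraph V) (M : ℕ) (D : V → V → Bool) (S : V → ℕ)
    (hQ : Q G M D S)
    (hmin : ∀ D' S', Q G M D' S' → pot M D S ≤ pot M D' S') (v : V) :
    S v ≤ 2 * indeg D v := by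
  classical
  obtain ⟨hadj, hanti, hprop, hge, hzero, hcap⟩ := hQ
  by_contra hbadv
  push_neg at hbadv
  have hd1 : 1 ≤ indeg D v := by
    rcases Nat.eq_zero_or_pos (indeg D v) with h0 | h
    · have := hzero v h0; omega
    · exact h
  have hs3 : 2 * indeg D v + 1 ≤ S v := hbadv
  by_cases hA : ∃ t, indeg D v ≤ t ∧ t < S v ∧ ∀ x, G.Adj v x → S x ≠ t
  · -- Move M1 : lower S at v
    obtain ⟨t, htd, hts, hblock⟩ := hA
    set S' := Function.update S v t with hS'
    have hS'app : ∀ x, S' x = if x = v then t else S x := by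
      intro x; simp [hS', Function.update_apply]
    have hQ' : Q G M D S' := by
      refine ⟨hadj, hanti, ?_, ?_, ?_, ?_⟩
      · intro a b hab
        have hne := G.ne_of_adj hab
        rw [hS'app a, hS'app b]
        split_ifs with h1 h2 h2
        · exact absurd (h1.trans h2.symm) hne
        · subst h1; exact fun h => (hblock b hab) h.symm
        · subst h2; exact fun h => (hblock a hab.symm) h
        · exact hprop a b hab
      · intro x
        rw [hS'app x]
        split_ifs with h1
        · subst h1; exact htd
        · exact hge x
      · intro x h0
        rw [hS'app x]
        split_ifs with h1
        · subst h1; omega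
        · exact hzero x h0
      · intro x
        rw [hS'app x]
        split_ifs with h1
        · exact le_trans (le_of_lt hts) (hcap v)
        · exact hcap x
    have hsum : ∑ x, S' x < ∑ x, S x := by
      apply Finset.sum_lt_sum
      · intro i _
        rw [hS'app i]
        split_ifs with h1
        · subst h1; exact le_of_lt hts
        · exact le_rfl
      · exact ⟨v, Finset.mem_univ v, by rw [hS'app v]; simp [hts]⟩
    have hlt := pot_lt_of_sum_lt M D D S' S (hQ'.2.2.2.2.2) hsum
    have := hmin D S' hQ'
    omega
  · -- Case B
    push_neg at hA
    have hout : ∃ u, G.Adj v u ∧ indeg D v ≤ S u ∧ S u < S v ∧ D u v = false := by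
      by_contra hno
      push_neg at hno
      set g : ℕ → V := fun t =>
        if h : indeg D v ≤ t ∧ t < S v then Classical.choose (hA t h.1 h.2) else v with hg
      have hgspec : ∀ t, indeg D v ≤ t → t < S v → G.Adj v (g t) ∧ S (g t) = t := by
        intro t h1 h2
        simp only [hg, dif_pos (And.intro h1 h2)]
        exact Classical.choose_spec (hA t h1 h2)
      have hmaps : ∀ t ∈ Finset.Ico (indeg D v) (S v),
          g t ∈ Finset.univ.filter (fun x => D x v = true) := by
        intro t ht
        rw [Finset.mem_Ico] at ht
        obtain ⟨hadjg, hSg⟩ := hgspec t ht.1 ht.2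
        have hDgv : D (g t) v ≠ false :=
          hno (g t) hadjg (by rw [hSg]; exact ht.1) (by rw [hSg]; exact ht.2)
        simp only [Finset.mem_filter, Finset.mem_univ, true_and]
        cases hDv : D (g t) v
        · exact absurd hDv hDgv
        · rfl
      have hinj : Set.InjOn g (Finset.Ico (indeg D v) (S v)) := by
        intro a ha b hb hab
        rw [Finset.coe_Ico, Set.mem_Ico] at ha hb
        have h1 := (hgspec a ha.1 ha.2).2
        have h2 := (hgspec b hb.1 hb.2).2
        rw [← h1, ← h2, hab]
      have hcard := Finset.card_le_card_of_injOn g hmaps hinj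
      rw [Nat.card_Ico] at hcard
      have : (Finset.univ.filter (fun x => D x v = true)).card = indeg D v := rfl
      omega
    obtain ⟨u, hvu_adj, htd, hts, hDuvf⟩ := hout
    have hvune : v ≠ u := G.ne_of_adj hvu_adj
    have hDvu : D v u = true := by
      have h := hanti v u hvu_adj
      rw [hDuvf] at h
      simpa using h.mpr (by simp)
    have he1 : 1 ≤ indeg D u := indeg_pos D hDvu
    have hrevadj : ∀ x y, rev D v u x y = true → G.Adj x y := by
      intro x y h
      by_cases h1 : x = u ∧ y = v
      · rw [h1.1, h1.2]; exact hvu_adj.symm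
      · by_cases h2 : x = v ∧ y = u
        · rw [h2.1, h2.2]; exact hvu_adj
        · rw [rev_eq_of _ _ _ _ _ h1 h2] at h; exact hadj x y h
    have hrevanti : ∀ x y, G.Adj x y → (rev D v u x y = true ↔ ¬ rev D v u y x = true) := by
      intro x y hxy
      by_cases h1 : x = u ∧ y = v
      · rw [h1.1, h1.2, rev_uv, rev_vu D v u (Ne.symm hvune)]
        simp
      · by_cases h2 : x = v ∧ y = u
        · rw [h2.1, h2.2, rev_uv, rev_vu D v u (Ne.symm hvune)]
          simp
        · rw [rev_eq_of _ _ _ _ _ h1 h2,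
            rev_eq_of _ _ _ _ _ (fun h => h2 ⟨h.2, h.1⟩) (fun h => h1 ⟨h.2, h.1⟩)]
          exact hanti x y hxy
    by_cases hB1 : indeg D u = 1
    · -- Move M2
      have huniq : ∀ x, D x u = true → x = v := by
        intro x hx
        have h1 : x ∈ Finset.univ.filter (fun z => D z u = true) := by simp [hx]
        have h2 : v ∈ Finset.univ.filter (fun z => D z u = true) := by simp [hDvu]
        exact Finset.card_le_one.mp (le_of_eq hB1) x h1 v h2
      set S' := Function.update S u 0 with hS'
      have hS'app : ∀ x, S' x = if x = u then 0 else S x := by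
        intro x; simp [hS', Function.update_apply]
      have hQ' : Q G M (rev D v u) S' := by
        refine ⟨hrevadj, hrevanti, ?_, ?_, ?_, ?_⟩
        · intro a b hab
          have hne := G.ne_of_adj hab
          rw [hS'app a, hS'app b]
          split_ifs with h1 h2 h2
          · exact absurd (h1.trans h2.symm) hne
          · -- a = u : show 0 ≠ S b
            have hab' : G.Adj u b := h1 ▸ hab
            by_cases hbv : b = v
            · rw [hbv]; omega
            · have hDub : D u b = true := by
                cases hDbu : D b u
                · have h := hanti u b hab'
                  rw [hDbu] at h
                  simpa using h.mpr (by simp)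
                · exact absurd (huniq b hDbu) hbv
              have := le_trans (indeg_pos D hDub) (hge b)
              omega
          · -- b = u : show S a ≠ 0
            have hab' : G.Adj a u := h2 ▸ hab
            by_cases hav : a = v
            · rw [hav]; omega
            · have hDua : D u a = true := by
                cases hDau : D a u
                · have h := hanti u a hab'.symm
                  rw [hDau] at h
                  simpa using h.mpr (by simp)
                · exact absurd (huniq a hDau) hav
              have := le_trans (indeg_pos D hDua) (hge a)
              omega
          · exact hprop a b hab
        · intro x
          rw [hS'app x]
          by_cases hxu : x = u
          · rw [if_pos hxu, hxu, indeg_rev_u D v u (Ne.symm hvune) hDvu, hB1]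
          · rw [if_neg hxu]
            by_cases hxv : x = v
            · rw [hxv, indeg_rev_v D v u (Ne.symm hvune) hDuvf]
              omega
            · rw [indeg_rev_other D v u x hxv hxu]
              exact hge x
        · intro x h0
          rw [hS'app x]
          by_cases hxu : x = u
          · rw [if_pos hxu]
          · rw [if_neg hxu]
            by_cases hxv : x = v
            · rw [hxv, indeg_rev_v D v u (Ne.symm hvune) hDuvf] at h0
              omega
            · rw [indeg_rev_other D v u x hxv hxu] at h0
              exact hzero x h0
        · intro x
          rw [hS'app x]
          split_ifs with h1
          · exact Nat.zero_le M
          · exact hcap x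
      have hsum : ∑ x, S' x < ∑ x, S x := by
        apply Finset.sum_lt_sum
        · intro i _
          rw [hS'app i]
          split_ifs with h1
          · exact Nat.zero_le _
          · exact le_rfl
        · refine ⟨u, Finset.mem_univ u, ?_⟩
          rw [hS'app u, if_pos rfl]
          omega
      have hlt := pot_lt_of_sum_lt M (rev D v u) D S' S (hQ'.2.2.2.2.2) hsum
      have := hmin (rev D v u) S' hQ'
      omega
    · -- Move M0 : pure reversal, indeg D u ≥ 2
      have he2 : 2 ≤ indeg D u := by omega
      have hQ' : Q G M (rev D v u) S := by
        refine ⟨hrevadj, hrevanti, hprop, ?_, ?_, hcap⟩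
        · intro x
          by_cases hxv : x = v
          · rw [hxv, indeg_rev_v D v u (Ne.symm hvune) hDuvf]
            omega
          · by_cases hxu : x = u
            · rw [hxu, indeg_rev_u D v u (Ne.symm hvune) hDvu]
              exact le_trans (Nat.sub_le _ _) (hge u)
            · rw [indeg_rev_other D v u x hxv hxu]
              exact hge x
        · intro x h0
          by_cases hxv : x = v
          · rw [hxv] at h0 ⊢
            rw [indeg_rev_v D v u (Ne.symm hvune) hDuvf] at h0
            omega
          · by_cases hxu : x = u
            · rw [hxu] at h0 ⊢
              rw [indeg_rev_u D v u (Ne.symm hvune) hDvu] at h0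
              omega
            · rw [indeg_rev_other D v u x hxv hxu] at h0
              exact hzero x h0
      have hθ : theta (rev D v u) S < theta D S :=
        theta_rev_lt D S v u hvune hDvu hDuvf hbadv hts he1
      have hpot : pot M (rev D v u) S < pot M D S := by
        unfold pot
        omega
      have := hmin (rev D v u) S hQ'
      omega

lemma exists_semiproper (G : SimpleGraph V) :
    ∃ O : WOrientation G, IsSemiProper O := by
  classical
  set n := Fintype.card V with hn
  set e := Fintype.equivFin V with he
  set rk : V → ℕ := fun x => (e x : ℕ) with hrk
  have rk_inj : ∀ x y : V, rk x = rk y → x = y := by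
    intro x y h
    exact e.injective (Fin.ext h)
  have rk_lt : ∀ x : V, rk x < n := fun x => (e x).2
  set Df : V → V → Bool := fun u v => decide (G.Adj u v ∧ rk u < rk v) with hDf
  set wf : V → V → ℕ := fun u v => (n + 1) ^ (max (rk u) (rk v) + 1) with hwf
  have hDadj : ∀ u v, Df u v = true → G.Adj u v := by
    intro u v h; exact (of_decide_eq_true h).1
  have hDanti : ∀ u v, G.Adj u v → (Df u v = true ↔ ¬ Df v u = true) := by
    intro u v hadj
    have hne : rk u ≠ rk v := fun h => G.ne_of_adj hadj (rk_inj _ _ h)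
    simp only [hDf, decide_eq_true_eq]
    constructor
    · rintro ⟨-, h⟩ ⟨-, h'⟩; omega
    · intro h
      refine ⟨hadj, ?_⟩
      by_contra hlt
      exact h ⟨hadj.symm, by omega⟩
  have hwsymm : ∀ u v, wf u v = wf v u := by
    intro u v; simp only [hwf]; rw [max_comm]
  have hwpos : ∀ u v, G.Adj u v → 1 ≤ wf u v := by
    intro u v _; simp only [hwf]; exact Nat.one_le_pow _ _ (by omega)
  have hsum : ∀ x : V, ∑ u ∈ Finset.univ.filter (fun u => Df u x = true), wf u x
      = (Finset.univ.filter (fun u => Df u x = true)).card * (n + 1) ^ (rk x + 1) := by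
    intro x
    have hcong : ∀ u ∈ Finset.univ.filter (fun u => Df u x = true),
        wf u x = (n + 1) ^ (rk x + 1) := by
      intro u hu
      simp only [Finset.mem_filter] at hu
      have : rk u < rk x := (of_decide_eq_true hu.2).2
      simp only [hwf]
      rw [max_eq_right (le_of_lt this)]
    rw [Finset.sum_congr rfl hcong, Finset.sum_const, smul_eq_mul]
  refine ⟨⟨Df, wf, hDadj, hDanti, hwsymm, hwpos⟩, ?_⟩
  intro u v hadj
  have huv : u ≠ v := G.ne_of_adj hadj
  have hne : rk u ≠ rk v := fun h => huv (rk_inj _ _ h)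
  set O : WOrientation G := ⟨Df, wf, hDadj, hDanti, hwsymm, hwpos⟩ with hO
  have hins : ∀ x : V, inSum O x
      = (Finset.univ.filter (fun u => Df u x = true)).card * (n + 1) ^ (rk x + 1) := by
    intro x; exact hsum x
  -- wlog rk u < rk v
  have main : ∀ a b : V, G.Adj a b → rk a < rk b → inSum O a ≠ inSum O b := by
    intro a b hab hlt
    have hbpos : a ∈ Finset.univ.filter (fun u => Df u b = true) := by
      simp only [Finset.mem_filter, hDf, decide_eq_true_eq]
      exact ⟨Finset.mem_univ a, hab, hlt⟩
    have hcardb : 1 ≤ (Finset.univ.filter (fun u => Df u b = true)).card :=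
      Finset.card_pos.2 ⟨a, hbpos⟩
    have hcarda : (Finset.univ.filter (fun u => Df u a = true)).card ≤ n := by
      rw [hn]; exact le_trans (Finset.card_filter_le _ _) (le_of_eq (Finset.card_univ))
    rw [hins a, hins b]
    intro heq
    have h1 : (Finset.univ.filter (fun u => Df u a = true)).card * (n + 1) ^ (rk a + 1)
        < (n + 1) ^ (rk a + 2) := by
      calc _ ≤ n * (n + 1) ^ (rk a + 1) := Nat.mul_le_mul_right _ hcarda
        _ < (n + 1) * (n + 1) ^ (rk a + 1) :=
            Nat.mul_lt_mul_of_pos_right (by omega) (by positivity)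
        _ = (n + 1) ^ (rk a + 2) := by ring
    have h2 : (n + 1) ^ (rk a + 2) ≤ (n + 1) ^ (rk b + 1) := by
      apply Nat.pow_le_pow_right (by omega)
      omega
    have h3 : (n + 1) ^ (rk b + 1)
        ≤ (Finset.univ.filter (fun u => Df u b = true)).card * (n + 1) ^ (rk b + 1) :=
      Nat.le_mul_of_pos_left _ hcardb
    omega
  rcases lt_or_gt_of_ne hne with h | h
  · exact main u v hadj h
  · exact fun heq => (main v u hadj.symm h) heq.symm


lemma indeg_le_inSum {G : SimpleGraph V} (O : WOrientation G) (v : V) :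
    indeg O.dir v ≤ inSum O v := by
  unfold indeg inSum
  calc (Finset.univ.filter (fun u => O.dir u v = true)).card
      = ∑ _u ∈ Finset.univ.filter (fun u => O.dir u v = true), 1 := by
        rw [Finset.sum_const, smul_eq_mul, mul_one]
    _ ≤ _ := Finset.sum_le_sum (fun u hu => by
        simp only [Finset.mem_filter] at hu
        exact O.w_pos u v (O.dir_adj u v hu.2))

lemma inSum_eq_zero {G : SimpleGraph V} (O : WOrientation G) (v : V)
    (h : indeg O.dir v = 0) : inSum O v = 0 := by
  unfold indeg at h
  rw [Finset.card_eq_zero] at h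
  unfold inSum
  rw [h, Finset.sum_empty]

end Stmt3Aux

/-- Every finite simple graph has an optimal semi-proper orientation in which every
edge weight is 1 or 2. -/
theorem stmt3 (G : SimpleGraph V) :
    ∃ O : WOrientation G, IsSemiProper O ∧
      (∀ u v, G.Adj u v → O.w u v = 1 ∨ O.w u v = 2) ∧
      maxS O = semiNum G := by
  classical
  open Stmt3Aux in
  set M := semiNum G with hM
  -- the defining set of semiNum is nonempty
  have hSne : {k | ∃ O : WOrientation G, IsSemiProper O ∧ maxS O = k}.Nonempty := by
    obtain ⟨O, hO⟩ := Stmt3Aux.exists_semiproper G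
    exact ⟨maxS O, O, hO, rfl⟩
  obtain ⟨O₀, hO₀sp, hO₀max⟩ := Nat.sInf_mem hSne
  -- initial good pair
  have hQ₀ : Stmt3Aux.Q G M O₀.dir (inSum O₀) := by
    refine ⟨O₀.dir_adj, O₀.dir_antisymm, hO₀sp, Stmt3Aux.indeg_le_inSum O₀,
      Stmt3Aux.inSum_eq_zero O₀, ?_⟩
    intro v
    have : M = maxS O₀ := hO₀max.symm
    rw [this]
    exact Finset.le_sup (Finset.mem_univ v)
  -- minimize the potential over good pairs
  have hPne : {k | ∃ (D : V → V → Bool) (S : V → ℕ),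
      Stmt3Aux.Q G M D S ∧ Stmt3Aux.pot M D S = k}.Nonempty :=
    ⟨Stmt3Aux.pot M O₀.dir (inSum O₀), O₀.dir, inSum O₀, hQ₀, rfl⟩
  obtain ⟨D, S, hQ, hpotEq⟩ := Nat.sInf_mem hPne
  have hmin : ∀ D' S', Stmt3Aux.Q G M D' S' →
      Stmt3Aux.pot M D S ≤ Stmt3Aux.pot M D' S' := by
    intro D' S' hQ'
    rw [hpotEq]
    exact Nat.sInf_le ⟨D', S', hQ', rfl⟩
  have hgood : ∀ v, S v ≤ 2 * Stmt3Aux.indeg D v :=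
    Stmt3Aux.no_bad G M D S hQ hmin
  obtain ⟨hadj, hanti, hprop, hge, hzero, hcap⟩ := hQ
  -- choose which in-edges get weight 2
  have hch : ∀ v : V, ∃ F : Finset V,
      F ⊆ Finset.univ.filter (fun u => D u v = true) ∧
      F.card = S v - Stmt3Aux.indeg D v := by
    intro v
    obtain ⟨F, h1, h2⟩ := Finset.exists_subset_card_eq
      (s := Finset.univ.filter (fun u => D u v = true)) (n := S v - Stmt3Aux.indeg D v)
      (by show S v - Stmt3Aux.indeg D v ≤ Stmt3Aux.indeg D v
          have h1 := hgood v; have h2 := hge v; omega)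
    exact ⟨F, h1, h2⟩
  choose φ hφsub hφcard using hch
  set O : WOrientation G :=
    ⟨D, fun a b => if (D a b = true ∧ a ∈ φ b) ∨ (D b a = true ∧ b ∈ φ a) then 2 else 1,
      hadj, hanti, by
        intro a b
        exact if_congr or_comm rfl rfl, by
        intro a b _
        split_ifs <;> omega⟩ with hO
  have hinSum : ∀ v, inSum O v = S v := by
    intro v
    have hrw : inSum O v = ∑ u ∈ Finset.univ.filter (fun u => D u v = true),
        (if (D u v = true ∧ u ∈ φ v) ∨ (D v u = true ∧ v ∈ φ u) then 2 else 1) := rfl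
    rw [hrw]
    have hcong : ∀ u ∈ Finset.univ.filter (fun u => D u v = true),
        (if (D u v = true ∧ u ∈ φ v) ∨ (D v u = true ∧ v ∈ φ u) then 2 else 1)
        = (if u ∈ φ v then 2 else 1) := by
      intro u hu
      simp only [Finset.mem_filter] at hu
      have hDuv : D u v = true := hu.2
      have hDvu : ¬ D v u = true := (hanti u v (hadj u v hDuv)).mp hDuv
      by_cases hm : u ∈ φ v
      · rw [if_pos hm, if_pos (Or.inl ⟨hDuv, hm⟩)]
      · rw [if_neg hm, if_neg (by
          rintro (⟨-, hc⟩ | ⟨hc, -⟩)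
          · exact hm hc
          · exact hDvu hc)]
    rw [Finset.sum_congr rfl hcong, Finset.sum_ite]
    have hfil1 : (Finset.univ.filter (fun u => D u v = true)).filter (fun u => u ∈ φ v)
        = φ v := by
      ext x
      simp only [Finset.mem_filter, Finset.mem_univ, true_and]
      constructor
      · exact fun h => h.2
      · intro hx
        have := hφsub v hx
        simp only [Finset.mem_filter, Finset.mem_univ, true_and] at this
        exact ⟨this, hx⟩
    rw [hfil1, Finset.sum_const, Finset.sum_const, smul_eq_mul, smul_eq_mul]
    have hsplit := Finset.card_filter_add_card_filter_not
      (s := Finset.univ.filter (fun u => D u v = true)) (p := fun u => u ∈ φ v)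
    rw [hfil1] at hsplit
    have h1 := hφcard v
    have h2 := hge v
    have h3 := hgood v
    have hid : Stmt3Aux.indeg D v = (Finset.univ.filter (fun u => D u v = true)).card := rfl
    rw [hid] at h1 h2 h3
    omega
  refine ⟨O, ?_, ?_, ?_⟩
  · intro a b hab
    rw [hinSum a, hinSum b]
    exact hprop a b hab
  · intro a b _
    show (if _ then 2 else 1) = 1 ∨ (if _ then 2 else 1) = 2
    split_ifs
    · right; rfl
    · left; rfl
  · -- maxS O = semiNum G
    have hle : maxS O ≤ M := by
      apply Finset.sup_le
      intro v _
      rw [hinSum v]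
      exact hcap v
    have hge' : M ≤ maxS O := Nat.sInf_le ⟨O, by
      intro a b hab
      rw [hinSum a, hinSum b]
      exact hprop a b hab, rfl⟩
    omega
end

section
/- Every tree T has semi-proper orientation number at most 2: there exists an orientation of the edges of T and a weight function with values in {1,2} such that adjacent vertices have distinct weighted in-sums, and every weighted in-sum is at most 2. -/
open Finset

variable {V : Type*} [Fintype V] [DecidableEq V]

/-- Abstract combinatorial core: given a "parent" function for a root `r` and a
"depth" function compatible with it, such that every edge connects a vertex with
its parent, we can build the desired semi-proper orientation with weights in
`{1,2}` and all in-sums at most `2`. -/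
lemma aux_main {V : Type*} [Fintype V] [DecidableEq V] (T : SimpleGraph V)
    (d : V → ℕ) (par : V → V) (r : V)
    (hpar_adj : ∀ v, v ≠ r → T.Adj (par v) v)
    (hd : ∀ v, v ≠ r → d v = d (par v) + 1)
    (hdisj : ∀ u v, T.Adj u v → (v ≠ r ∧ u = par v) ∨ (u ≠ r ∧ v = par u)) :
    ∃ O : WOrientation T, IsSemiProper O ∧
      (∀ u v, T.Adj u v → O.w u v = 1 ∨ O.w u v = 2) ∧
      maxS O ≤ 2 := by
  classical
  have hnotboth : ∀ u v, T.Adj u v → ¬((v ≠ r ∧ u = par v) ∧ (u ≠ r ∧ v = par u)) := by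
    rintro u v hadj ⟨⟨hv, rfl⟩, ⟨hu, hpu⟩⟩
    have h1 := hd v hv
    have h2 := hd (par v) hu
    rw [← hpu] at h2
    omega
  have hanti : ∀ u v, T.Adj u v → ((v ≠ r ∧ u = par v) ↔ ¬(u ≠ r ∧ v = par u)) := by
    intro u v hadj
    constructor
    · intro h1 h2; exact hnotboth u v hadj ⟨h1, h2⟩
    · intro h2
      rcases hdisj u v hadj with h | h
      · exact h
      · exact absurd h h2
  let O : WOrientation T :=
    { dir := fun u v => decide (v ≠ r ∧ u = par v)
      w := fun u v => if Odd (max (d u) (d v)) then 1 else 2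
      dir_adj := by
        intro u v h
        rw [decide_eq_true_eq] at h
        rw [h.2]
        exact hpar_adj v h.1
      dir_antisymm := by
        intro u v hadj
        simpa using hanti u v hadj
      w_symm := by intro u v; rw [max_comm]
      w_pos := by intro u v _; split_ifs <;> omega }
  have hdirO : ∀ u v, O.dir u v = decide (v ≠ r ∧ u = par v) := fun _ _ => rfl
  have hwO : ∀ u v, O.w u v = if Odd (max (d u) (d v)) then 1 else 2 := fun _ _ => rfl
  have hsum : ∀ v, inSum O v = if v = r then 0 else if Odd (d v) then 1 else 2 := by
    intro v
    by_cases hv : v = r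
    · subst hv
      rw [if_pos rfl]
      have hfil : Finset.univ.filter (fun u => O.dir u v = true) = ∅ := by
        ext u
        simp [hdirO]
      simp only [inSum, hfil, Finset.sum_empty]
    · rw [if_neg hv]
      have hfil : Finset.univ.filter (fun u => O.dir u v = true) = {par v} := by
        ext u
        simp only [Finset.mem_filter, Finset.mem_univ, true_and, Finset.mem_singleton,
          hdirO, decide_eq_true_eq]
        exact ⟨fun h => h.2, fun h => ⟨hv, h⟩⟩
      simp only [inSum, hfil, Finset.sum_singleton, hwO]
      have h1 := hd v hv
      rw [max_eq_right (by omega : d (par v) ≤ d v)]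
  have hne2 : ∀ u v, T.Adj u v → v ≠ r → u = par v → inSum O u ≠ inSum O v := by
    intro u v hadj hv hpv
    rw [hsum u, hsum v, if_neg hv]
    have h1 := hd v hv
    rw [← hpv] at h1
    simp only [Nat.odd_iff]
    split_ifs <;> omega
  refine ⟨O, ?_, ?_, ?_⟩
  · intro u v hadj
    rcases hdisj u v hadj with ⟨hv, hpv⟩ | ⟨hu, hpu⟩
    · exact hne2 u v hadj hv hpv
    · exact (hne2 v u hadj.symm hu hpu).symm
  · intro u v _
    rw [hwO]
    split_ifs <;> simp
  · refine Finset.sup_le ?_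
    intro v _
    rw [hsum]
    split_ifs <;> omega

/-- Every tree `T` satisfies `χ⃗ₛ(T) ≤ 2`: there is an orientation with weights in
`{1,2}` in which adjacent vertices get distinct weighted in-sums, all at most `2`. -/
theorem stmt4 (T : SimpleGraph V) (hT : T.IsTree) :
    ∃ O : WOrientation T, IsSemiProper O ∧
      (∀ u v, T.Adj u v → O.w u v = 1 ∨ O.w u v = 2) ∧
      maxS O ≤ 2 := by
  classical
  have hU : ∀ x y : V, ∃! p : T.Walk x y, p.IsPath := hT.existsUnique_path
  obtain ⟨r⟩ : Nonempty V := hT.isConnected.nonempty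
  choose P hP using fun v => (hU r v).exists
  have huniq : ∀ {x y : V} (p q : T.Walk x y), p.IsPath → q.IsPath → p = q :=
    fun p q hp hq => ((hU _ _).unique hp hq)
  -- every non-root vertex has a parent
  have spec : ∀ v, ∃ x, v ≠ r → ∃ h : T.Adj x v, P v = (P x).concat h := by
    intro v
    by_cases hv : v = r
    · exact ⟨r, fun h => absurd hv h⟩
    · obtain ⟨x, h, q, hq⟩ :=
        SimpleGraph.Walk.exists_eq_cons_of_ne hv (P v).reverse
      have hq' : q.IsPath := by
        have := (hP v).reverse
        rw [hq] at this
        exact this.of_cons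
      have hxr : q.reverse = P x := huniq _ _ hq'.reverse (hP x)
      refine ⟨x, fun _ => ⟨h.symm, ?_⟩⟩
      have h2 := congrArg SimpleGraph.Walk.reverse hq
      rw [SimpleGraph.Walk.reverse_reverse] at h2
      rw [h2, SimpleGraph.Walk.reverse_cons, hxr, SimpleGraph.Walk.concat_eq_append]
  choose par hpar using spec
  have hpar_adj : ∀ v, v ≠ r → T.Adj (par v) v := fun v hv => (hpar v hv).1
  have hd : ∀ v, v ≠ r → (P v).length = (P (par v)).length + 1 := by
    intro v hv
    obtain ⟨h, hdec⟩ := hpar v hv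
    rw [hdec, SimpleGraph.Walk.length_concat]
  have key : ∀ v, v ≠ r → ∀ (x : V) (h : T.Adj x v) (q : T.Walk r x),
      q.IsPath → P v = q.concat h → par v = x := by
    intro v hv x h q hqp heq
    obtain ⟨h', hdec⟩ := hpar v hv
    have heq2 : (P (par v)).concat h' = q.concat h := by rw [← hdec, heq]
    obtain ⟨hx, -⟩ := SimpleGraph.Walk.concat_inj heq2
    exact hx
  have hPr : P r = SimpleGraph.Walk.nil :=
    huniq _ _ (hP r) SimpleGraph.Walk.IsPath.nil
  have hdisj : ∀ u v, T.Adj u v →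
      (v ≠ r ∧ u = par v) ∨ (u ≠ r ∧ v = par u) := by
    intro u v hadj
    by_cases hv : v ∈ (P u).support
    · right
      have hur : u ≠ r := by
        rintro rfl
        rw [hPr] at hv
        simp only [SimpleGraph.Walk.support_nil, List.mem_singleton] at hv
        subst hv
        exact T.irrefl hadj
      refine ⟨hur, ?_⟩
      have ht : ((P u).takeUntil v hv).IsPath := (hP u).takeUntil hv
      have hdpath : ((P u).dropUntil v hv).IsPath := (hP u).dropUntil hv
      have hsingle : (P u).dropUntil v hv =
          SimpleGraph.Walk.cons hadj.symm SimpleGraph.Walk.nil :=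
        huniq _ _ hdpath (by simp [SimpleGraph.Walk.cons_isPath_iff, hadj.ne'])
      have hdec : P u = ((P u).takeUntil v hv).concat hadj.symm := by
        conv_lhs => rw [← SimpleGraph.Walk.take_spec (P u) hv]
        rw [hsingle, SimpleGraph.Walk.concat_eq_append]
      exact (key u hur v hadj.symm _ ht hdec).symm
    · left
      have hvr : v ≠ r := by
        rintro rfl
        exact hv (P u).start_mem_support
      refine ⟨hvr, ?_⟩
      have hcp : ((P u).concat hadj).IsPath := by
        rw [← SimpleGraph.Walk.isPath_reverse_iff, SimpleGraph.Walk.reverse_concat]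
        exact (hP u).reverse.cons
          (by rwa [SimpleGraph.Walk.support_reverse, List.mem_reverse])
      exact (key v hvr u hadj (P u) (hP u) (huniq _ _ (hP v) hcp)).symm
  exact aux_main T (fun v => (P v).length) par r hpar_adj hd hdisj
end

section
/- Reversing all edges along a directed path from v to p in an orientation, while transferring each edge's weight one step along the path (and adjusting the first and last edge weights appropriately as in the proof of the 1-2 theorem), preserves the weighted in-sum of every vertex: if D' reverses the path P = v, z₁, …, z_l, p and w' shifts weights so that each internal path vertex receives the same total incoming weight, then S_{(D',w')}(f) = S_{(D,w)}(f) for every vertex f. -/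
open Finset

variable {V : Type*} [Fintype V] [DecidableEq V]

/-- If an edge is directed `x → y` then it is not directed `y → x`. -/
lemma WOrientation.rev' {G : SimpleGraph V} (O : WOrientation G) {x y : V}
    (h : O.dir x y = true) : O.dir y x ≠ true := fun h' =>
  ((O.dir_antisymm y x (O.dir_adj x y h).symm).mp h') h

lemma sum_split {F F' : V → ℕ} {t : Finset V}
    (hout : ∀ a ∉ t, F' a = F a) (ht : ∑ a ∈ t, F' a = ∑ a ∈ t, F a) :
    ∑ a, F' a = ∑ a, F a := by
  rw [← Finset.sum_sdiff (Finset.subset_univ t), ← Finset.sum_sdiff (Finset.subset_univ t)]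
  exact congrArg₂ (· + ·)
    (Finset.sum_congr rfl fun a ha => hout a (Finset.mem_sdiff.mp ha).2) ht

lemma inSum_eq_sum_ite {G : SimpleGraph V} (O : WOrientation G) (f : V) :
    inSum O f = ∑ a, if O.dir a f = true then O.w a f else 0 := by
  rw [inSum, Finset.sum_filter]

/-- Reversing a directed path `P = z 0, z 1, …, z l, z (l+1)` (from `v = z 0` to
`p = z (l+1)`) while transferring each edge's weight one step along the path, decreasing
by one the weight of a bad in-edge `u → v` of weight `α > 2`, setting the new weight of
the first reversed edge to 1, and compensating at `p` on two further weight-one in-edges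
`uj → p`, `uj' → p` (whose new weights are `2` and `w(z l, p)` respectively), preserves
the weighted in-sum of every vertex. -/
theorem stmt12 (G : SimpleGraph V) (O O' : WOrientation G)
    (l : ℕ) (z : ℕ → V) (u uj uj' : V)
    (hzinj : ∀ i j, i ≤ l + 1 → j ≤ l + 1 → z i = z j → i = j)
    (hu : ∀ i, i ≤ l + 1 → u ≠ z i)
    (huj : ∀ i, i ≤ l + 1 → uj ≠ z i)
    (huj' : ∀ i, i ≤ l + 1 → uj' ≠ z i)
    (hujne : uj ≠ uj') (hune1 : u ≠ uj) (hune2 : u ≠ uj')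
    -- in `D` the path is directed `z 0 → z 1 → ⋯ → z (l+1)`
    (hpath : ∀ i, i ≤ l → O.dir (z i) (z (i + 1)) = true)
    -- bad in-edge `u → v` of weight `α > 2`
    (huv : O.dir u (z 0) = true) (hα : 2 < O.w u (z 0))
    -- `uj, uj'` are in-neighbors of `p = z (l+1)` of weight 1
    (hujdir : O.dir uj (z (l + 1)) = true) (hujw : O.w uj (z (l + 1)) = 1)
    (huj'dir : O.dir uj' (z (l + 1)) = true) (huj'w : O.w uj' (z (l + 1)) = 1)
    -- `D'` reverses the path and agrees with `D` elsewhere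
    (hrev : ∀ i, i ≤ l → O'.dir (z (i + 1)) (z i) = true)
    (hdir_same : ∀ a b : V,
      (∀ i, i ≤ l → ¬(a = z i ∧ b = z (i + 1)) ∧ ¬(a = z (i + 1) ∧ b = z i)) →
      O'.dir a b = O.dir a b)
    -- the new weights
    (hw1 : O'.w u (z 0) = O.w u (z 0) - 1)
    (hw2 : O'.w (z 1) (z 0) = 1)
    (hw3 : ∀ i, i + 1 ≤ l → O'.w (z (i + 2)) (z (i + 1)) = O.w (z i) (z (i + 1)))
    (hwuj : O'.w uj (z (l + 1)) = 2)
    (hwuj' : O'.w uj' (z (l + 1)) = O.w (z l) (z (l + 1)))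
    -- all other edge weights are unchanged
    (hw_other : ∀ a b : V,
      s(a, b) ≠ s(u, z 0) →
      (∀ i, i ≤ l → s(a, b) ≠ s(z i, z (i + 1))) →
      s(a, b) ≠ s(uj, z (l + 1)) → s(a, b) ≠ s(uj', z (l + 1)) →
      O'.w a b = O.w a b) :
    ∀ f : V, inSum O' f = inSum O f := by
  intro f
  rw [inSum_eq_sum_ite, inSum_eq_sum_ite]
  by_cases hf : ∃ k, k ≤ l + 1 ∧ f = z k
  · obtain ⟨k, hk, rfl⟩ := hf
    rcases Nat.eq_zero_or_pos k with rfl | hk1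
    · -- f = z 0
      apply sum_split (t := {u, z 1})
      · intro a ha
        simp only [Finset.mem_insert, Finset.mem_singleton, not_or] at ha
        obtain ⟨hau, haz1⟩ := ha
        have hd : O'.dir a (z 0) = O.dir a (z 0) := by
          apply hdir_same
          intro i hi
          refine ⟨?_, ?_⟩
          · rintro ⟨rfl, h⟩
            exact absurd (hzinj 0 (i + 1) (by omega) (by omega) h) (by omega)
          · rintro ⟨rfl, h⟩
            have hi0 : i = 0 := (hzinj 0 i (by omega) (by omega) h).symm
            subst hi0; exact haz1 rfl
        rw [hd]
        by_cases hda : O.dir a (z 0) = true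
        · rw [if_pos hda, if_pos hda]
          apply hw_other
          · intro heq
            rcases Sym2.eq_iff.mp heq with ⟨rfl, -⟩ | ⟨-, h2⟩
            · exact hau rfl
            · exact hu 0 (by omega) h2.symm
          · intro i hi heq
            rcases Sym2.eq_iff.mp heq with ⟨rfl, h2⟩ | ⟨rfl, h2⟩
            · exact absurd (hzinj 0 (i + 1) (by omega) (by omega) h2) (by omega)
            · have hi0 : i = 0 := (hzinj 0 i (by omega) (by omega) h2).symm
              subst hi0; exact haz1 rfl
          · intro heq
            rcases Sym2.eq_iff.mp heq with ⟨-, h2⟩ | ⟨-, h2⟩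
            · exact absurd (hzinj 0 (l + 1) (by omega) (by omega) h2) (by omega)
            · exact huj 0 (by omega) h2.symm
          · intro heq
            rcases Sym2.eq_iff.mp heq with ⟨-, h2⟩ | ⟨-, h2⟩
            · exact absurd (hzinj 0 (l + 1) (by omega) (by omega) h2) (by omega)
            · exact huj' 0 (by omega) h2.symm
        · rw [if_neg hda, if_neg hda]
      · have h1ne : u ≠ z 1 := hu 1 (by omega)
        rw [Finset.sum_pair h1ne, Finset.sum_pair h1ne]
        have hdu' : O'.dir u (z 0) = true := by
          rw [hdir_same u (z 0) ?_]
          · exact huv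
          · intro i hi
            exact ⟨fun ⟨h, _⟩ => hu i (by omega) h, fun ⟨h, _⟩ => hu (i + 1) (by omega) h⟩
        have hz1 : ¬ O.dir (z 1) (z 0) = true := O.rev' (hpath 0 (by omega))
        have hz1' : O'.dir (z 1) (z 0) = true := hrev 0 (by omega)
        rw [if_pos hdu', if_pos hz1', if_pos huv, if_neg hz1, hw1, hw2]
        omega
    · by_cases hkl : k = l + 1
      · -- f = z (l + 1)
        subst hkl
        apply sum_split (t := {z l, uj, uj'})
        · intro a ha
          simp only [Finset.mem_insert, Finset.mem_singleton, not_or] at ha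
          obtain ⟨hazl, hauj, hauj'⟩ := ha
          have hd : O'.dir a (z (l + 1)) = O.dir a (z (l + 1)) := by
            apply hdir_same
            intro i hi
            refine ⟨?_, ?_⟩
            · rintro ⟨rfl, h⟩
              have hil : i = l := by
                have := hzinj (l + 1) (i + 1) (by omega) (by omega) h; omega
              subst hil; exact hazl rfl
            · rintro ⟨rfl, h⟩
              exact absurd (hzinj (l + 1) i (by omega) (by omega) h) (by omega)
          rw [hd]
          by_cases hda : O.dir a (z (l + 1)) = true
          · rw [if_pos hda, if_pos hda]
            apply hw_other
            · intro heq
              rcases Sym2.eq_iff.mp heq with ⟨-, h2⟩ | ⟨-, h2⟩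
              · exact absurd (hzinj (l + 1) 0 (by omega) (by omega) h2) (by omega)
              · exact hu (l + 1) (by omega) h2.symm
            · intro i hi heq
              rcases Sym2.eq_iff.mp heq with ⟨rfl, h2⟩ | ⟨rfl, h2⟩
              · have hil : i = l := by
                  have := hzinj (l + 1) (i + 1) (by omega) (by omega) h2; omega
                subst hil; exact hazl rfl
              · exact absurd (hzinj (l + 1) i (by omega) (by omega) h2) (by omega)
            · intro heq
              rcases Sym2.eq_iff.mp heq with ⟨rfl, -⟩ | ⟨-, h2⟩
              · exact hauj rfl
              · exact huj (l + 1) (by omega) h2.symm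
            · intro heq
              rcases Sym2.eq_iff.mp heq with ⟨rfl, -⟩ | ⟨-, h2⟩
              · exact hauj' rfl
              · exact huj' (l + 1) (by omega) h2.symm
          · rw [if_neg hda, if_neg hda]
        · have hne1 : z l ≠ uj := fun h => huj l (by omega) h.symm
          have hne2 : z l ≠ uj' := fun h => huj' l (by omega) h.symm
          have hmem : z l ∉ ({uj, uj'} : Finset V) := by
            simp [hne1, hne2]
          rw [Finset.sum_insert hmem, Finset.sum_insert hmem,
            Finset.sum_pair hujne, Finset.sum_pair hujne]
          have hzl : O.dir (z l) (z (l + 1)) = true := hpath l (by omega)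
          have hzl' : ¬ O'.dir (z l) (z (l + 1)) = true := O'.rev' (hrev l (by omega))
          have hduj' : O'.dir uj (z (l + 1)) = true := by
            rw [hdir_same uj (z (l + 1)) ?_]
            · exact hujdir
            · intro i hi
              exact ⟨fun ⟨h, _⟩ => huj i (by omega) h, fun ⟨h, _⟩ => huj (i + 1) (by omega) h⟩
          have hduj'2 : O'.dir uj' (z (l + 1)) = true := by
            rw [hdir_same uj' (z (l + 1)) ?_]
            · exact huj'dir
            · intro i hi
              exact ⟨fun ⟨h, _⟩ => huj' i (by omega) h, fun ⟨h, _⟩ => huj' (i + 1) (by omega) h⟩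
          rw [if_neg hzl', if_pos hduj', if_pos hduj'2, if_pos hzl, if_pos hujdir,
            if_pos huj'dir, hwuj, hwuj', hujw, huj'w]
          omega
      · -- f = z (m + 1), 1 ≤ m + 1 ≤ l
        obtain ⟨m, rfl⟩ : ∃ m, k = m + 1 := ⟨k - 1, by omega⟩
        have hm : m + 1 ≤ l := by omega
        apply sum_split (t := {z m, z (m + 2)})
        · intro a ha
          simp only [Finset.mem_insert, Finset.mem_singleton, not_or] at ha
          obtain ⟨hazm, hazm2⟩ := ha
          have hd : O'.dir a (z (m + 1)) = O.dir a (z (m + 1)) := by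
            apply hdir_same
            intro i hi
            refine ⟨?_, ?_⟩
            · rintro ⟨rfl, h⟩
              have him : i = m := by
                have := hzinj (m + 1) (i + 1) (by omega) (by omega) h; omega
              subst him; exact hazm rfl
            · rintro ⟨rfl, h⟩
              have him : i = m + 1 := (hzinj (m + 1) i (by omega) (by omega) h).symm
              subst him; exact hazm2 rfl
          rw [hd]
          by_cases hda : O.dir a (z (m + 1)) = true
          · rw [if_pos hda, if_pos hda]
            apply hw_other
            · intro heq
              rcases Sym2.eq_iff.mp heq with ⟨-, h2⟩ | ⟨-, h2⟩
              · exact absurd (hzinj (m + 1) 0 (by omega) (by omega) h2) (by omega)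
              · exact hu (m + 1) (by omega) h2.symm
            · intro i hi heq
              rcases Sym2.eq_iff.mp heq with ⟨rfl, h2⟩ | ⟨rfl, h2⟩
              · have him : i = m := by
                  have := hzinj (m + 1) (i + 1) (by omega) (by omega) h2; omega
                subst him; exact hazm rfl
              · have him : i = m + 1 := (hzinj (m + 1) i (by omega) (by omega) h2).symm
                subst him; exact hazm2 rfl
            · intro heq
              rcases Sym2.eq_iff.mp heq with ⟨-, h2⟩ | ⟨-, h2⟩
              · exact absurd (hzinj (m + 1) (l + 1) (by omega) (by omega) h2) (by omega)
              · exact huj (m + 1) (by omega) h2.symm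
            · intro heq
              rcases Sym2.eq_iff.mp heq with ⟨-, h2⟩ | ⟨-, h2⟩
              · exact absurd (hzinj (m + 1) (l + 1) (by omega) (by omega) h2) (by omega)
              · exact huj' (m + 1) (by omega) h2.symm
          · rw [if_neg hda, if_neg hda]
        · have hne : z m ≠ z (m + 2) := fun h =>
            absurd (hzinj m (m + 2) (by omega) (by omega) h) (by omega)
          rw [Finset.sum_pair hne, Finset.sum_pair hne]
          have h1 : O.dir (z m) (z (m + 1)) = true := hpath m (by omega)
          have h2 : ¬ O.dir (z (m + 2)) (z (m + 1)) = true := O.rev' (hpath (m + 1) hm)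
          have h3 : ¬ O'.dir (z m) (z (m + 1)) = true := O'.rev' (hrev m (by omega))
          have h4 : O'.dir (z (m + 2)) (z (m + 1)) = true := hrev (m + 1) hm
          rw [if_pos h1, if_neg h2, if_neg h3, if_pos h4, hw3 m hm]
          omega
  · -- f is not on the path
    push_neg at hf
    apply sum_split (t := ∅)
    · intro a _
      have hd : O'.dir a f = O.dir a f := by
        apply hdir_same
        intro i hi
        exact ⟨fun ⟨_, h⟩ => hf (i + 1) (by omega) h, fun ⟨_, h⟩ => hf i (by omega) h⟩
      rw [hd]
      by_cases hda : O.dir a f = true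
      · rw [if_pos hda, if_pos hda]
        apply hw_other
        · intro heq
          rcases Sym2.eq_iff.mp heq with ⟨-, h2⟩ | ⟨rfl, h2⟩
          · exact hf 0 (by omega) h2
          · exact O.rev' huv (h2 ▸ hda)
        · intro i hi heq
          rcases Sym2.eq_iff.mp heq with ⟨-, h2⟩ | ⟨-, h2⟩
          · exact hf (i + 1) (by omega) h2
          · exact hf i (by omega) h2
        · intro heq
          rcases Sym2.eq_iff.mp heq with ⟨-, h2⟩ | ⟨rfl, h2⟩
          · exact hf (l + 1) (by omega) h2
          · exact O.rev' hujdir (h2 ▸ hda)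
        · intro heq
          rcases Sym2.eq_iff.mp heq with ⟨-, h2⟩ | ⟨rfl, h2⟩
          · exact hf (l + 1) (by omega) h2
          · exact O.rev' huj'dir (h2 ▸ hda)
      · rw [if_neg hda, if_neg hda]
    · rfl
end

section
/- Let (D,w) be a semi-proper orientation of a graph G with all weighted in-sums at most 2, and suppose G contains an induced subgraph consisting of vertices p₁,…,p₅, x, ¬x where p₂, x, ¬x form a triangle, p₂ is adjacent to p₁ and p₃, and p₃ is adjacent to p₄ and p₅ (a tree of triangles as in the gadget T_x). If all edge weights in this gadget are 1, then {S(x), S(¬x)} = {1, 2}. -/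
open Finset

variable {V : Type*} [Fintype V] [DecidableEq V]

lemma inSum_ge_aux {G : SimpleGraph V} (O : WOrientation G) (v : V) (s : Finset V) :
    ∑ u ∈ s.filter (fun u => O.dir u v = true), O.w u v ≤ inSum O v :=
  Finset.sum_le_sum_of_subset (Finset.filter_subset_filter _ (Finset.subset_univ s))

lemma inSum_eq_aux {G : SimpleGraph V} (O : WOrientation G) (v : V) (s : Finset V)
    (hs : ∀ u, O.dir u v = true → u ∈ s) :
    inSum O v = ∑ u ∈ s, if O.dir u v = true then O.w u v else 0 := by
  rw [inSum, ← Finset.sum_filter]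
  congr 1
  ext u
  simp only [Finset.mem_filter, Finset.mem_univ, true_and]
  exact ⟨fun h => ⟨hs u h, h⟩, fun h => h.2⟩

lemma dir_pair {G : SimpleGraph V} (O : WOrientation G) {u v : V} (h : G.Adj u v) :
    (if O.dir u v = true then (1:ℕ) else 0) + (if O.dir v u = true then (1:ℕ) else 0) = 1 := by
  by_cases hd : O.dir u v = true
  · have h2 := (O.dir_antisymm u v h).mp hd
    simp [hd, h2]
  · have h2 : O.dir v u = true := by
      by_contra h3
      exact hd ((O.dir_antisymm u v h).mpr h3)
    simp [hd, h2]

set_option linter.unusedVariables false in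
lemma stmt13_arith (S1 S2 S3 S4 S5 Sx Sn
    i12 i21 i23 i32 i2x ix2 i2n in2 i34 i43 i35 i53 ixn inx : ℕ)
    (q12 : i12 + i21 = 1) (q23 : i23 + i32 = 1) (q2x : i2x + ix2 = 1)
    (q2n : i2n + in2 = 1) (q34 : i34 + i43 = 1) (q35 : i35 + i53 = 1)
    (qxn : ixn + inx = 1)
    (E1 : S1 = i21) (E2 : S2 = i12 + (i32 + (ix2 + in2)))
    (E3 : S3 = i23 + (i43 + i53)) (E4 : S4 = i34) (E5 : S5 = i35)
    (Gx : i2x + inx ≤ Sx) (Gn : i2n + ixn ≤ Sn)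
    (d12 : S1 ≠ S2) (d23 : S2 ≠ S3) (d2x : S2 ≠ Sx) (d2n : S2 ≠ Sn)
    (d34 : S3 ≠ S4) (d35 : S3 ≠ S5) (dxn : Sx ≠ Sn)
    (b2 : S2 ≤ 2) (b3 : S3 ≤ 2) (bx : Sx ≤ 2) (bn : Sn ≤ 2) :
    (Sx = 1 ∧ Sn = 2) ∨ (Sx = 2 ∧ Sn = 1) := by
  omega
/-- Gadget `T_x`: vertices `p₁,…,p₅, x, ¬x` where `p₂, x, ¬x` form a triangle, `p₂` is
moreover adjacent exactly to `p₁, p₃, x, ¬x`, `p₃` exactly to `p₂, p₄, p₅`, and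
`p₁, p₄, p₅` are leaves. If a semi-proper orientation has all in-sums at most 2 and all
gadget edge weights equal to 1, then `{S(x), S(¬x)} = {1, 2}`. -/
theorem stmt13 (G : SimpleGraph V) (O : WOrientation G)
    (p₁ p₂ p₃ p₄ p₅ x nx : V)
    (hnodup : ([p₁, p₂, p₃, p₄, p₅, x, nx] : List V).Nodup)
    (hp1 : ∀ a, G.Adj p₁ a ↔ a = p₂)
    (hp2 : ∀ a, G.Adj p₂ a ↔ (a = p₁ ∨ a = p₃ ∨ a = x ∨ a = nx))
    (hp3 : ∀ a, G.Adj p₃ a ↔ (a = p₂ ∨ a = p₄ ∨ a = p₅))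
    (hp4 : ∀ a, G.Adj p₄ a ↔ a = p₃)
    (hp5 : ∀ a, G.Adj p₅ a ↔ a = p₃)
    (hxnx : G.Adj x nx)
    (hsp : IsSemiProper O) (hmax : ∀ u, inSum O u ≤ 2)
    (hw : ∀ a b, G.Adj a b →
      (a ∈ ({p₁, p₂, p₃, p₄, p₅} : Set V) ∨ b ∈ ({p₁, p₂, p₃, p₄, p₅} : Set V) ∨
        (a = x ∧ b = nx) ∨ (a = nx ∧ b = x)) → O.w a b = 1) :
    ({inSum O x, inSum O nx} : Finset ℕ) = {1, 2} := by
  simp only [List.nodup_cons, List.mem_cons, List.not_mem_nil, or_false, not_or,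
    List.nodup_nil, and_true] at hnodup
  obtain ⟨⟨n12, n13, n14, n15, n1x, n1n⟩, ⟨n23, n24, n25, n2x, n2n⟩,
    ⟨n34, n35, n3x, n3n⟩, ⟨n45, n4x, n4n⟩, ⟨n5x, n5n⟩, nxn⟩ := hnodup
  -- adjacencies
  have a12 : G.Adj p₁ p₂ := (hp1 p₂).mpr rfl
  have a23 : G.Adj p₂ p₃ := (hp2 p₃).mpr (Or.inr (Or.inl rfl))
  have a2x : G.Adj p₂ x := (hp2 x).mpr (Or.inr (Or.inr (Or.inl rfl)))
  have a2n : G.Adj p₂ nx := (hp2 nx).mpr (Or.inr (Or.inr (Or.inr rfl)))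
  have a34 : G.Adj p₃ p₄ := (hp3 p₄).mpr (Or.inr (Or.inl rfl))
  have a35 : G.Adj p₃ p₅ := (hp3 p₅).mpr (Or.inr (Or.inr rfl))
  -- weights
  have w21 : O.w p₂ p₁ = 1 := hw _ _ a12.symm (by simp)
  have w12 : O.w p₁ p₂ = 1 := hw _ _ a12 (by simp)
  have w32 : O.w p₃ p₂ = 1 := hw _ _ a23.symm (by simp)
  have wx2 : O.w x p₂ = 1 := hw _ _ a2x.symm (by simp)
  have wn2 : O.w nx p₂ = 1 := hw _ _ a2n.symm (by simp)
  have w23 : O.w p₂ p₃ = 1 := hw _ _ a23 (by simp)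
  have w43 : O.w p₄ p₃ = 1 := hw _ _ a34.symm (by simp)
  have w53 : O.w p₅ p₃ = 1 := hw _ _ a35.symm (by simp)
  have w34 : O.w p₃ p₄ = 1 := hw _ _ a34 (by simp)
  have w35 : O.w p₃ p₅ = 1 := hw _ _ a35 (by simp)
  have w2x : O.w p₂ x = 1 := hw _ _ a2x (by simp)
  have w2n : O.w p₂ nx = 1 := hw _ _ a2n (by simp)
  have wxn : O.w x nx = 1 := hw _ _ hxnx (by simp)
  have wnx : O.w nx x = 1 := hw _ _ hxnx.symm (by simp)
  -- in-sum formulas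
  have E1 : inSum O p₁ = (if O.dir p₂ p₁ = true then (1:ℕ) else 0) := by
    rw [inSum_eq_aux O p₁ {p₂} (fun u h => by
      simp [(hp1 u).mp (O.dir_adj u p₁ h).symm]), Finset.sum_singleton, w21]
  have E4 : inSum O p₄ = (if O.dir p₃ p₄ = true then (1:ℕ) else 0) := by
    rw [inSum_eq_aux O p₄ {p₃} (fun u h => by
      simp [(hp4 u).mp (O.dir_adj u p₄ h).symm]), Finset.sum_singleton, w34]
  have E5 : inSum O p₅ = (if O.dir p₃ p₅ = true then (1:ℕ) else 0) := by
    rw [inSum_eq_aux O p₅ {p₃} (fun u h => by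
      simp [(hp5 u).mp (O.dir_adj u p₅ h).symm]), Finset.sum_singleton, w35]
  have E2 : inSum O p₂ = (if O.dir p₁ p₂ = true then (1:ℕ) else 0)
      + ((if O.dir p₃ p₂ = true then (1:ℕ) else 0)
      + ((if O.dir x p₂ = true then (1:ℕ) else 0)
      + (if O.dir nx p₂ = true then (1:ℕ) else 0))) := by
    rw [inSum_eq_aux O p₂ ({p₁, p₃, x, nx} : Finset V) (fun u h => by
      rcases (hp2 u).mp (O.dir_adj u p₂ h).symm with h | h | h | h <;> simp [h])]
    rw [show ({p₁, p₃, x, nx} : Finset V) = insert p₁ (insert p₃ (insert x {nx})) from rfl]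
    rw [Finset.sum_insert (by simp [n13, n1x, n1n]),
      Finset.sum_insert (by simp [n3x, n3n]),
      Finset.sum_insert (by simp [nxn]), Finset.sum_singleton, w12, w32, wx2, wn2]
  have E3 : inSum O p₃ = (if O.dir p₂ p₃ = true then (1:ℕ) else 0)
      + ((if O.dir p₄ p₃ = true then (1:ℕ) else 0)
      + (if O.dir p₅ p₃ = true then (1:ℕ) else 0)) := by
    rw [inSum_eq_aux O p₃ ({p₂, p₄, p₅} : Finset V) (fun u h => by
      rcases (hp3 u).mp (O.dir_adj u p₃ h).symm with h | h | h <;> simp [h])]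
    rw [show ({p₂, p₄, p₅} : Finset V) = insert p₂ (insert p₄ {p₅}) from rfl]
    rw [Finset.sum_insert (by simp [n24, n25]),
      Finset.sum_insert (by simp [n45]), Finset.sum_singleton, w23, w43, w53]
  -- lower bounds for x and nx
  have Gx : (if O.dir p₂ x = true then (1:ℕ) else 0)
      + (if O.dir nx x = true then (1:ℕ) else 0) ≤ inSum O x := by
    have h := inSum_ge_aux O x ({p₂, nx} : Finset V)
    rwa [Finset.sum_filter,
      show ({p₂, nx} : Finset V) = insert p₂ {nx} from rfl,
      Finset.sum_insert (by simp [n2n]), Finset.sum_singleton, w2x, wnx] at h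
  have Gn : (if O.dir p₂ nx = true then (1:ℕ) else 0)
      + (if O.dir x nx = true then (1:ℕ) else 0) ≤ inSum O nx := by
    have h := inSum_ge_aux O nx ({p₂, x} : Finset V)
    rwa [Finset.sum_filter,
      show ({p₂, x} : Finset V) = insert p₂ {x} from rfl,
      Finset.sum_insert (by simp [n2x]), Finset.sum_singleton, w2n, wxn] at h
  -- pair equations
  have q12 := dir_pair O a12
  have q23 := dir_pair O a23
  have q2x := dir_pair O a2x
  have q2n := dir_pair O a2n
  have q34 := dir_pair O a34
  have q35 := dir_pair O a35
  have qxn := dir_pair O hxnx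
  -- semi-properness
  have d12 := hsp _ _ a12
  have d23 := hsp _ _ a23
  have d2x := hsp _ _ a2x
  have d2n := hsp _ _ a2n
  have d34 := hsp _ _ a34
  have d35 := hsp _ _ a35
  have dxn := hsp _ _ hxnx
  have b2 := hmax p₂
  have b3 := hmax p₃
  have bx := hmax x
  have bn := hmax nx
  -- abstract the indicators
  obtain ⟨i12, h1⟩ : ∃ n, (if O.dir p₁ p₂ = true then (1:ℕ) else 0) = n := ⟨_, rfl⟩
  obtain ⟨i21, h2⟩ : ∃ n, (if O.dir p₂ p₁ = true then (1:ℕ) else 0) = n := ⟨_, rfl⟩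
  obtain ⟨i23, h3⟩ : ∃ n, (if O.dir p₂ p₃ = true then (1:ℕ) else 0) = n := ⟨_, rfl⟩
  obtain ⟨i32, h4⟩ : ∃ n, (if O.dir p₃ p₂ = true then (1:ℕ) else 0) = n := ⟨_, rfl⟩
  obtain ⟨i2x, h5⟩ : ∃ n, (if O.dir p₂ x = true then (1:ℕ) else 0) = n := ⟨_, rfl⟩
  obtain ⟨ix2, h6⟩ : ∃ n, (if O.dir x p₂ = true then (1:ℕ) else 0) = n := ⟨_, rfl⟩
  obtain ⟨i2n, h7⟩ : ∃ n, (if O.dir p₂ nx = true then (1:ℕ) else 0) = n := ⟨_, rfl⟩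
  obtain ⟨in2, h8⟩ : ∃ n, (if O.dir nx p₂ = true then (1:ℕ) else 0) = n := ⟨_, rfl⟩
  obtain ⟨i34, h9⟩ : ∃ n, (if O.dir p₃ p₄ = true then (1:ℕ) else 0) = n := ⟨_, rfl⟩
  obtain ⟨i43, h10⟩ : ∃ n, (if O.dir p₄ p₃ = true then (1:ℕ) else 0) = n := ⟨_, rfl⟩
  obtain ⟨i35, h11⟩ : ∃ n, (if O.dir p₃ p₅ = true then (1:ℕ) else 0) = n := ⟨_, rfl⟩
  obtain ⟨i53, h12'⟩ : ∃ n, (if O.dir p₅ p₃ = true then (1:ℕ) else 0) = n := ⟨_, rfl⟩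
  obtain ⟨ixn, h13⟩ : ∃ n, (if O.dir x nx = true then (1:ℕ) else 0) = n := ⟨_, rfl⟩
  obtain ⟨inx, h14⟩ : ∃ n, (if O.dir nx x = true then (1:ℕ) else 0) = n := ⟨_, rfl⟩
  simp only [h1, h2, h3, h4, h5, h6, h7, h8, h9, h10, h11, h12',
    h13, h14] at E1 E2 E3 E4 E5 Gx Gn q12 q23 q2x q2n q34 q35 qxn
  have key := stmt13_arith (inSum O p₁) (inSum O p₂) (inSum O p₃) (inSum O p₄)
    (inSum O p₅) (inSum O x) (inSum O nx) i12 i21 i23 i32 i2x ix2 i2n in2 i34 i43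
    i35 i53 ixn inx q12 q23 q2x q2n q34 q35 qxn E1 E2 E3 E4 E5 Gx Gn
    d12 d23 d2x d2n d34 d35 dxn b2 b3 bx bn
  rcases key with ⟨k1, k2⟩ | ⟨k1, k2⟩ <;> rw [k1, k2]
  exact Finset.pair_comm 2 1
end
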